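/- In the setting of the symplectic Krein formula, assume additionally that the closures of T(dom(A₁)) and T(dom(A₂)) are Lagrangian subspaces of 𝔥 × 𝔥 with orthogonal projections Q₁ and Q₂. Then R₂(ζ) − R₁(ζ) = (T R₂(ζ̄))* Q₂ J Q₁ (T R₁(ζ)), and consequently R₂(ζ) − R₁(ζ) = (T R₂(ζ̄))* (Q₂ − Q₁) J Q₁ (T R₁(ζ)); in particular ‖R₂(ζ) − R₁(ζ)‖ ≤ ‖T R₂(ζ̄)‖ · ‖Q₂ − Q₁‖ · ‖T R₁(ζ)‖. -/

import Mathlib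

open scoped InnerProductSpace
open ContinuousLinearMap

/-- The operator `J(f₁,f₂) = (f₂, −f₁)` on `𝔥 ×₂ 𝔥`. -/
noncomputable def Jsymp (𝔥 : Type*)
    [NormedAddCommGroup 𝔥] [InnerProductSpace ℂ 𝔥] [CompleteSpace 𝔥] :
    WithLp 2 (𝔥 × 𝔥) →L[ℂ] WithLp 2 (𝔥 × 𝔥) :=
  ((WithLp.prodContinuousLinearEquiv 2 ℂ 𝔥 𝔥).symm.toContinuousLinearMap) ∘L
    (((ContinuousLinearMap.snd ℂ 𝔥 𝔥).prod (-(ContinuousLinearMap.fst ℂ 𝔥 𝔥))) ∘L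
      (WithLp.prodContinuousLinearEquiv 2 ℂ 𝔥 𝔥).toContinuousLinearMap)

lemma Jsymp_fst {𝔥 : Type*} [NormedAddCommGroup 𝔥] [InnerProductSpace ℂ 𝔥]
    [CompleteSpace 𝔥] (p : WithLp 2 (𝔥 × 𝔥)) : (Jsymp 𝔥 p).fst = p.snd := by
  simp [Jsymp]

lemma Jsymp_snd {𝔥 : Type*} [NormedAddCommGroup 𝔥] [InnerProductSpace ℂ 𝔥]
    [CompleteSpace 𝔥] (p : WithLp 2 (𝔥 × 𝔥)) : (Jsymp 𝔥 p).snd = -p.fst := by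
  simp [Jsymp]

lemma Jsymp_norm {𝔥 : Type*} [NormedAddCommGroup 𝔥] [InnerProductSpace ℂ 𝔥]
    [CompleteSpace 𝔥] (p : WithLp 2 (𝔥 × 𝔥)) : ‖Jsymp 𝔥 p‖ = ‖p‖ := by
  have h1 : ⟪Jsymp 𝔥 p, Jsymp 𝔥 p⟫_ℂ = ⟪p, p⟫_ℂ := by
    rw [WithLp.prod_inner_apply, WithLp.prod_inner_apply, WithLp.ofLp_fst, WithLp.ofLp_snd,
      WithLp.ofLp_fst, WithLp.ofLp_snd, Jsymp_fst, Jsymp_snd,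
      inner_neg_neg]
    ring
  rw [inner_self_eq_norm_sq_to_K, inner_self_eq_norm_sq_to_K] at h1
  have h3 : (‖Jsymp 𝔥 p‖ : ℝ) ^ 2 = (‖p‖ : ℝ) ^ 2 := by exact_mod_cast h1
  nlinarith [norm_nonneg (Jsymp 𝔥 p), norm_nonneg p]

set_option maxHeartbeats 1000000 in
/-- In the setting of the symplectic Krein formula, assume additionally
that the closures of `T(dom A₁)` and `T(dom A₂)` are Lagrangian subspaces of `𝔥 × 𝔥` with
orthogonal projections `Q₁` and `Q₂`.  Then
`R₂(ζ) − R₁(ζ) = (T R₂(ζ̄))* Q₂ J Q₁ (T R₁(ζ))`, consequently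
`R₂(ζ) − R₁(ζ) = (T R₂(ζ̄))* (Q₂ − Q₁) J Q₁ (T R₁(ζ))`, and in particular
`‖R₂(ζ) − R₁(ζ)‖ ≤ ‖T R₂(ζ̄)‖ ‖Q₂ − Q₁‖ ‖T R₁(ζ)‖`. -/
theorem symplectic_krein_formula_projections
    {H 𝔥 : Type*}
    [NormedAddCommGroup H] [InnerProductSpace ℂ H] [CompleteSpace H]
    [NormedAddCommGroup 𝔥] [InnerProductSpace ℂ 𝔥] [CompleteSpace 𝔥]
    (A : H →ₗ.[ℂ] H)
    (hdense : Dense (A.domain : Set H))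
    (hclosed : A.IsClosed)
    (hsym : ∀ u v : A.domain, ⟪A u, (v : H)⟫_ℂ = ⟪(u : H), A v⟫_ℂ)
    (D : Submodule ℂ H)
    (hDsub : D ≤ A.adjoint.domain)
    (hAD : A.domain ≤ D)
    (T : D →ₗ[ℂ] WithLp 2 (𝔥 × 𝔥))
    (hTdense : DenseRange T)
    (hGreen : ∀ u v : D,
      ⟪A.adjoint ⟨(u : H), hDsub u.2⟩, (v : H)⟫_ℂ
          - ⟪(u : H), A.adjoint ⟨(v : H), hDsub v.2⟩⟫_ℂ
        = ⟪(T u).snd, (T v).fst⟫_ℂ - ⟪(T u).fst, (T v).snd⟫_ℂ)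
    (A₁ A₂ : H →ₗ.[ℂ] H)
    (hA₁ : A ≤ A₁) (hsa₁ : A₁.adjoint = A₁) (hdom₁ : A₁.domain ≤ D)
    (hA₂ : A ≤ A₂) (hsa₂ : A₂.adjoint = A₂) (hdom₂ : A₂.domain ≤ D)
    (ζ : ℂ) (R₁ R₂ R₂' : H →L[ℂ] H)
    (hm₁ : ∀ f : H, R₁ f ∈ A₁.domain)
    (hr₁ : ∀ f : H, A₁ ⟨R₁ f, hm₁ f⟩ - ζ • R₁ f = f)
    (hr₁' : ∀ u : A₁.domain, R₁ (A₁ u - ζ • (u : H)) = (u : H))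
    (hm₂ : ∀ f : H, R₂ f ∈ A₂.domain)
    (hr₂ : ∀ f : H, A₂ ⟨R₂ f, hm₂ f⟩ - ζ • R₂ f = f)
    (hr₂' : ∀ u : A₂.domain, R₂ (A₂ u - ζ • (u : H)) = (u : H))
    (hm₂' : ∀ f : H, R₂' f ∈ A₂.domain)
    (hr₂c : ∀ f : H, A₂ ⟨R₂' f, hm₂' f⟩ - (starRingEnd ℂ ζ) • R₂' f = f)
    (hr₂c' : ∀ u : A₂.domain, R₂' (A₂ u - (starRingEnd ℂ ζ) • (u : H)) = (u : H))
    (TR₁ TR₂' : H →L[ℂ] WithLp 2 (𝔥 × 𝔥))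
    (hTR₁ : ∀ f : H, TR₁ f = T ⟨R₁ f, hdom₁ (hm₁ f)⟩)
    (hTR₂' : ∀ f : H, TR₂' f = T ⟨R₂' f, hdom₂ (hm₂' f)⟩)
    -- `Q₁`, `Q₂`: orthogonal projections onto the closures of `T(dom A₁)`, `T(dom A₂)`
    (Q₁ Q₂ : WithLp 2 (𝔥 × 𝔥) →L[ℂ] WithLp 2 (𝔥 × 𝔥))
    (hsaQ₁ : IsSelfAdjoint Q₁) (hidemQ₁ : IsIdempotentElem Q₁)
    (hsaQ₂ : IsSelfAdjoint Q₂) (hidemQ₂ : IsIdempotentElem Q₂)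
    (hranQ₁ : LinearMap.range (Q₁ : WithLp 2 (𝔥 × 𝔥) →ₗ[ℂ] WithLp 2 (𝔥 × 𝔥))
      = ((A₁.domain.comap D.subtype).map T).topologicalClosure)
    (hranQ₂ : LinearMap.range (Q₂ : WithLp 2 (𝔥 × 𝔥) →ₗ[ℂ] WithLp 2 (𝔥 × 𝔥))
      = ((A₂.domain.comap D.subtype).map T).topologicalClosure)
    -- the ranges of `Q₁` and `Q₂` are Lagrangian
    (hLag₁ : ∀ p : WithLp 2 (𝔥 × 𝔥),
      p ∈ LinearMap.range (Q₁ : WithLp 2 (𝔥 × 𝔥) →ₗ[ℂ] WithLp 2 (𝔥 × 𝔥)) ↔ ∀ q ∈ LinearMap.range (Q₁ : WithLp 2 (𝔥 × 𝔥) →ₗ[ℂ] WithLp 2 (𝔥 × 𝔥)), ⟪Jsymp 𝔥 p, q⟫_ℂ = 0)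
    (hLag₂ : ∀ p : WithLp 2 (𝔥 × 𝔥),
      p ∈ LinearMap.range (Q₂ : WithLp 2 (𝔥 × 𝔥) →ₗ[ℂ] WithLp 2 (𝔥 × 𝔥)) ↔ ∀ q ∈ LinearMap.range (Q₂ : WithLp 2 (𝔥 × 𝔥) →ₗ[ℂ] WithLp 2 (𝔥 × 𝔥)), ⟪Jsymp 𝔥 p, q⟫_ℂ = 0) :
    R₂ - R₁
        = (ContinuousLinearMap.adjoint TR₂') ∘L (Q₂ ∘L (Jsymp 𝔥 ∘L (Q₁ ∘L TR₁))) ∧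
      R₂ - R₁
        = (ContinuousLinearMap.adjoint TR₂') ∘L
            ((Q₂ - Q₁) ∘L (Jsymp 𝔥 ∘L (Q₁ ∘L TR₁))) ∧
      ‖R₂ - R₁‖ ≤ ‖TR₂'‖ * (‖Q₂ - Q₁‖ * ‖TR₁‖) := by

  classical
  -- J components
  have hJ1 : ∀ p : WithLp 2 (𝔥 × 𝔥), (Jsymp 𝔥 p).fst = p.snd := fun p => Jsymp_fst p
  have hJ2 : ∀ p : WithLp 2 (𝔥 × 𝔥), (Jsymp 𝔥 p).snd = -p.fst := fun p => Jsymp_snd p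
  -- projections fix their ranges
  have hfix : ∀ (Q : WithLp 2 (𝔥 × 𝔥) →L[ℂ] WithLp 2 (𝔥 × 𝔥)), IsIdempotentElem Q →
      ∀ p ∈ LinearMap.range (Q : WithLp 2 (𝔥 × 𝔥) →ₗ[ℂ] WithLp 2 (𝔥 × 𝔥)), Q p = p := by
    intro Q hQ p hp
    obtain ⟨x, rfl⟩ := hp
    have := congrFun (congrArg (fun (f : WithLp 2 (𝔥 × 𝔥) →L[ℂ] WithLp 2 (𝔥 × 𝔥)) =>
      (f : WithLp 2 (𝔥 × 𝔥) → WithLp 2 (𝔥 × 𝔥))) hQ) x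
    simpa using this
  have hQ₁sa : ∀ x y, ⟪Q₁ x, y⟫_ℂ = ⟪x, Q₁ y⟫_ℂ := by
    intro x y
    rw [← ContinuousLinearMap.adjoint_inner_left,
      (ContinuousLinearMap.isSelfAdjoint_iff').mp hsaQ₁]
  have hQ₂sa : ∀ x y, ⟪Q₂ x, y⟫_ℂ = ⟪x, Q₂ y⟫_ℂ := by
    intro x y
    rw [← ContinuousLinearMap.adjoint_inner_left,
      (ContinuousLinearMap.isSelfAdjoint_iff').mp hsaQ₂]
  -- membership of TR₁ g and TR₂' f in the ranges
  have hmemT₁ : ∀ g : H, TR₁ g ∈ LinearMap.range (Q₁ : WithLp 2 (𝔥 × 𝔥) →ₗ[ℂ] WithLp 2 (𝔥 × 𝔥)) := by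
    intro g
    rw [hranQ₁, hTR₁]
    refine Submodule.le_topologicalClosure _ ?_
    exact ⟨⟨R₁ g, hdom₁ (hm₁ g)⟩, by simpa using hm₁ g, rfl⟩
  have hmemT₂ : ∀ f : H, TR₂' f ∈ LinearMap.range (Q₂ : WithLp 2 (𝔥 × 𝔥) →ₗ[ℂ] WithLp 2 (𝔥 × 𝔥)) := by
    intro f
    rw [hranQ₂, hTR₂']
    refine Submodule.le_topologicalClosure _ ?_
    exact ⟨⟨R₂' f, hdom₂ (hm₂' f)⟩, by simpa using hm₂' f, rfl⟩
  -- Q₁ J Q₁ = 0 (Lagrangian)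
  have hQJQ : ∀ x, Q₁ (Jsymp 𝔥 (Q₁ x)) = 0 := by
    intro x
    have hmem : Q₁ (Jsymp 𝔥 (Q₁ x)) ∈ LinearMap.range (Q₁ : WithLp 2 (𝔥 × 𝔥) →ₗ[ℂ] WithLp 2 (𝔥 × 𝔥)) := ⟨_, rfl⟩
    have h0 : ⟪Jsymp 𝔥 (Q₁ x), Q₁ (Jsymp 𝔥 (Q₁ x))⟫_ℂ = 0 :=
      (hLag₁ (Q₁ x)).mp ⟨x, rfl⟩ _ hmem
    have : ⟪Q₁ (Jsymp 𝔥 (Q₁ x)), Q₁ (Jsymp 𝔥 (Q₁ x))⟫_ℂ = 0 := by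
      rw [hQ₁sa, hfix Q₁ hidemQ₁ _ hmem, h0]
    exact inner_self_eq_zero.mp this
  -- density of A₂.domain
  have hdense₂ : Dense (A₂.domain : Set H) := by
    have hsub : (A.domain : Set H) ⊆ (A₂.domain : Set H) := hA₂.1
    exact hdense.mono hsub
  have hdense₁ : Dense (A₁.domain : Set H) := by
    have hsub : (A.domain : Set H) ⊆ (A₁.domain : Set H) := hA₁.1
    exact hdense.mono hsub
  -- symmetry of A₂ and A₁
  have hsym₂ : ∀ x y : A₂.domain, ⟪A₂ x, (y : H)⟫_ℂ = ⟪(x : H), A₂ y⟫_ℂ := by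
    intro x y
    have := LinearPMap.adjoint_isFormalAdjoint (T := A₂) hdense₂
    rw [hsa₂] at this
    exact this x y
  have hsym₁ : ∀ x y : A₁.domain, ⟪A₁ x, (y : H)⟫_ℂ = ⟪(x : H), A₁ y⟫_ℂ := by
    intro x y
    have := LinearPMap.adjoint_isFormalAdjoint (T := A₁) hdense₁
    rw [hsa₁] at this
    exact this x y
  -- A₂ ≤ A† and A₁ ≤ A†
  have hfa₂ : A₂.IsFormalAdjoint A := by
    intro x y
    have hy : ((y : H)) ∈ A₂.domain := hA₂.1 y.2
    have := hsym₂ x ⟨y, hy⟩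
    rw [this, hA₂.2 (x := y) (y := ⟨y, hy⟩) rfl]
  have hle₂ : A₂ ≤ A.adjoint := (LinearPMap.IsFormalAdjoint.le_adjoint hdense hfa₂.symm)
  have hfa₁ : A₁.IsFormalAdjoint A := by
    intro x y
    have hy : ((y : H)) ∈ A₁.domain := hA₁.1 y.2
    have := hsym₁ x ⟨y, hy⟩
    rw [this, hA₁.2 (x := y) (y := ⟨y, hy⟩) rfl]
  have hle₁ : A₁ ≤ A.adjoint := (LinearPMap.IsFormalAdjoint.le_adjoint hdense hfa₁.symm)
  -- R₂' is the adjoint of R₂ pointwise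
  have hadj : ∀ f g : H, ⟪R₂' f, g⟫_ℂ = ⟪f, R₂ g⟫_ℂ := by
    intro f g
    have hg := hr₂ g
    have hf := hr₂c f
    have hg' : (g : H) = A₂ ⟨R₂ g, hm₂ g⟩ - ζ • R₂ g := hg.symm
    have hf' : (f : H) = A₂ ⟨R₂' f, hm₂' f⟩ - (starRingEnd ℂ ζ) • R₂' f := hf.symm
    calc ⟪R₂' f, g⟫_ℂ = ⟪R₂' f, A₂ ⟨R₂ g, hm₂ g⟩ - ζ • R₂ g⟫_ℂ := by rw [← hg']
      _ = ⟪R₂' f, A₂ ⟨R₂ g, hm₂ g⟩⟫_ℂ - ζ * ⟪R₂' f, R₂ g⟫_ℂ := by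
          rw [inner_sub_right, inner_smul_right]
      _ = ⟪A₂ ⟨R₂' f, hm₂' f⟩, R₂ g⟫_ℂ - ζ * ⟪R₂' f, R₂ g⟫_ℂ := by
          rw [hsym₂ ⟨R₂' f, hm₂' f⟩ ⟨R₂ g, hm₂ g⟩]
      _ = ⟪A₂ ⟨R₂' f, hm₂' f⟩ - (starRingEnd ℂ ζ) • R₂' f, R₂ g⟫_ℂ := by
          rw [inner_sub_left, inner_smul_left, Complex.conj_conj]
      _ = ⟪f, R₂ g⟫_ℂ := by rw [← hf']
  -- the key pointwise identity
  have key : ∀ f g : H,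
      ⟪f, (R₂ - R₁) g⟫_ℂ = ⟪TR₂' f, Jsymp 𝔥 (TR₁ g)⟫_ℂ := by
    intro f g
    set u : D := ⟨R₂' f, hdom₂ (hm₂' f)⟩ with hu
    set v : D := ⟨R₁ g, hdom₁ (hm₁ g)⟩ with hv
    have hG := hGreen u v
    have hAu : A.adjoint ⟨(u : H), hDsub u.2⟩ = A₂ ⟨R₂' f, hm₂' f⟩ :=
      (hle₂.2 (x := ⟨R₂' f, hm₂' f⟩) (y := ⟨(u : H), hDsub u.2⟩) rfl).symm
    have hAv : A.adjoint ⟨(v : H), hDsub v.2⟩ = A₁ ⟨R₁ g, hm₁ g⟩ :=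
      (hle₁.2 (x := ⟨R₁ g, hm₁ g⟩) (y := ⟨(v : H), hDsub v.2⟩) rfl).symm
    rw [hAu, hAv] at hG
    have hf' : A₂ ⟨R₂' f, hm₂' f⟩ = f + (starRingEnd ℂ ζ) • R₂' f := by
      exact eq_add_of_sub_eq (hr₂c f)
    have hg' : A₁ ⟨R₁ g, hm₁ g⟩ = g + ζ • R₁ g := by
      exact eq_add_of_sub_eq (hr₁ g)
    rw [hf', hg'] at hG
    have hLHS : ⟪(f : H) + (starRingEnd ℂ ζ) • R₂' f, R₁ g⟫_ℂ
        - ⟪R₂' f, (g : H) + ζ • R₁ g⟫_ℂ = ⟪f, R₁ g⟫_ℂ - ⟪R₂' f, g⟫_ℂ := by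
      rw [inner_add_left, inner_add_right, inner_smul_left, inner_smul_right,
        Complex.conj_conj]
      ring
    have hG' : ⟪f, R₁ g⟫_ℂ - ⟪R₂' f, g⟫_ℂ
        = ⟪(T u).snd, (T v).fst⟫_ℂ - ⟪(T u).fst, (T v).snd⟫_ℂ := by
      rw [← hLHS]; exact hG
    have hTfu : TR₂' f = T u := hTR₂' f
    have hTgv : TR₁ g = T v := hTR₁ g
    have : ⟪f, (R₂ - R₁) g⟫_ℂ = ⟪R₂' f, g⟫_ℂ - ⟪f, R₁ g⟫_ℂ := by
      simp only [ContinuousLinearMap.sub_apply, inner_sub_right, hadj f g]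
    rw [this, hTfu, hTgv, WithLp.prod_inner_apply, WithLp.ofLp_fst, WithLp.ofLp_snd,
      WithLp.ofLp_fst, WithLp.ofLp_snd, hJ1, hJ2, inner_neg_right]
    linear_combination -hG'
  -- first conclusion
  have main₁ : R₂ - R₁
      = (ContinuousLinearMap.adjoint TR₂') ∘L (Q₂ ∘L (Jsymp 𝔥 ∘L (Q₁ ∘L TR₁))) := by
    ext g
    refine ext_inner_left ℂ fun f => ?_
    rw [key f g]
    simp only [ContinuousLinearMap.comp_apply]
    rw [ContinuousLinearMap.adjoint_inner_right]
    rw [← hQ₂sa, hfix Q₂ hidemQ₂ _ (hmemT₂ f), hfix Q₁ hidemQ₁ _ (hmemT₁ g)]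
  -- second conclusion
  have hcomp_eq : (Q₂ ∘L (Jsymp 𝔥 ∘L (Q₁ ∘L TR₁)))
      = ((Q₂ - Q₁) ∘L (Jsymp 𝔥 ∘L (Q₁ ∘L TR₁))) := by
    ext g
    simp only [ContinuousLinearMap.comp_apply, ContinuousLinearMap.sub_apply]
    rw [hfix Q₁ hidemQ₁ _ (hmemT₁ g)]
    have h0 := hQJQ (TR₁ g)
    rw [hfix Q₁ hidemQ₁ _ (hmemT₁ g)] at h0
    rw [h0, sub_zero]
  have main₂ : R₂ - R₁
      = (ContinuousLinearMap.adjoint TR₂') ∘L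
          ((Q₂ - Q₁) ∘L (Jsymp 𝔥 ∘L (Q₁ ∘L TR₁))) := by
    rw [main₁, hcomp_eq]
  refine ⟨main₁, main₂, ?_⟩
  -- norm bound
  have hQ₁norm : ∀ x, ‖Q₁ x‖ ≤ ‖x‖ := by
    intro x
    rcases eq_or_lt_of_le (norm_nonneg (Q₁ x)) with h0 | h0
    · rw [← h0]; exact norm_nonneg x
    · have h1 : ⟪Q₁ x, Q₁ x⟫_ℂ = ⟪x, Q₁ (Q₁ x)⟫_ℂ := hQ₁sa x (Q₁ x)
      have h2 : Q₁ (Q₁ x) = Q₁ x := hfix Q₁ hidemQ₁ _ ⟨x, rfl⟩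
      rw [h2] at h1
      have h3 : ‖Q₁ x‖ * ‖Q₁ x‖ ≤ ‖x‖ * ‖Q₁ x‖ := by
        have h4 : (‖Q₁ x‖ : ℝ) * ‖Q₁ x‖ = ‖⟪Q₁ x, Q₁ x⟫_ℂ‖ := by
          rw [inner_self_eq_norm_sq_to_K]
          simp [sq, abs_of_nonneg, norm_nonneg]
        rw [h4, h1]
        exact norm_inner_le_norm x (Q₁ x)
      exact le_of_mul_le_mul_right h3 h0
  have hJnorm : ∀ p, ‖Jsymp 𝔥 p‖ = ‖p‖ := fun p => Jsymp_norm p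
  have hJQT : ‖Jsymp 𝔥 ∘L (Q₁ ∘L TR₁)‖ ≤ ‖TR₁‖ := by
    refine ContinuousLinearMap.opNorm_le_bound _ (norm_nonneg TR₁) fun x => ?_
    simp only [ContinuousLinearMap.comp_apply]
    rw [hJnorm]
    calc ‖Q₁ (TR₁ x)‖ ≤ ‖TR₁ x‖ := hQ₁norm _
      _ ≤ ‖TR₁‖ * ‖x‖ := TR₁.le_opNorm x
  calc ‖R₂ - R₁‖
      = ‖(ContinuousLinearMap.adjoint TR₂') ∘L
          ((Q₂ - Q₁) ∘L (Jsymp 𝔥 ∘L (Q₁ ∘L TR₁)))‖ := by rw [main₂]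
    _ ≤ ‖ContinuousLinearMap.adjoint TR₂'‖ * ‖(Q₂ - Q₁) ∘L (Jsymp 𝔥 ∘L (Q₁ ∘L TR₁))‖ :=
        ContinuousLinearMap.opNorm_comp_le _ _
    _ ≤ ‖ContinuousLinearMap.adjoint TR₂'‖ * (‖Q₂ - Q₁‖ * ‖Jsymp 𝔥 ∘L (Q₁ ∘L TR₁)‖) := by
        gcongr
        exact ContinuousLinearMap.opNorm_comp_le _ _
    _ ≤ ‖ContinuousLinearMap.adjoint TR₂'‖ * (‖Q₂ - Q₁‖ * ‖TR₁‖) := by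
        gcongr
    _ = ‖TR₂'‖ * (‖Q₂ - Q₁‖ * ‖TR₁‖) := by
        rw [LinearIsometryEquiv.norm_map ContinuousLinearMap.adjoint TR₂']
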